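/- Let Q₁, Q₂, M₁, M₂, M₃, M₄ be n×n real symmetric positive semidefinite matrices and let S₁, S₂ be n×n real symmetric matrices with S₂ − S₁ positive definite. Suppose the constraint S₁ ⪯ Q₁ + Q₂ ⪯ S₂ holds, together with the complementary slackness conditions Q₁·M₁ = 0, Q₂·M₂ = 0, (Q₁ + Q₂ − S₁)·M₃ = 0, (S₂ − Q₁ − Q₂)·M₄ = 0, and the stationarity condition M₄ = M₂ + M₃. Then (S₂ − Q₁)·M₂ = 0 (the zero matrix). -/

import Mathlib

open Matrix

private lemma trace_self_mul_transpose_nonneg {n m : ℕ} (M : Matrix (Fin n) (Fin m) ℝ) :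
    0 ≤ (M * Mᴴ).trace := by
  rw [Matrix.trace]
  refine Finset.sum_nonneg fun i _ => ?_
  simp only [Matrix.diag_apply, Matrix.mul_apply, Matrix.conjTranspose_apply, star_trivial]
  exact Finset.sum_nonneg fun j _ => mul_self_nonneg _

private lemma eq_zero_of_trace_self_mul_transpose {n m : ℕ} (M : Matrix (Fin n) (Fin m) ℝ)
    (h : (M * Mᴴ).trace = 0) : M = 0 := by
  rw [Matrix.trace] at h
  have h' : ∀ i ∈ Finset.univ, (M * Mᴴ).diag i = 0 := by
    refine (Finset.sum_eq_zero_iff_of_nonneg fun i _ => ?_).mp h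
    simp only [Matrix.diag_apply, Matrix.mul_apply, Matrix.conjTranspose_apply, star_trivial]
    exact Finset.sum_nonneg fun j _ => mul_self_nonneg _
  ext i j
  have hi := h' i (Finset.mem_univ i)
  simp only [Matrix.diag_apply, Matrix.mul_apply, Matrix.conjTranspose_apply, star_trivial] at hi
  have := (Finset.sum_eq_zero_iff_of_nonneg fun j _ => mul_self_nonneg (M i j)).mp hi j
    (Finset.mem_univ j)
  simpa [mul_self_eq_zero] using this

private lemma trace_psd_mul_nonneg {n : ℕ} {A B : Matrix (Fin n) (Fin n) ℝ}
    (hA : A.PosSemidef) (hB : B.PosSemidef) : 0 ≤ (A * B).trace := by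
  open scoped MatrixOrder Matrix.Norms.L2Operator in
  obtain ⟨X, hX⟩ : ∃ C, A = Cᴴ * C :=
    CStarAlgebra.nonneg_iff_eq_star_mul_self.mp hA.nonneg
  open scoped MatrixOrder Matrix.Norms.L2Operator in
  obtain ⟨Y, hY⟩ : ∃ C, B = Cᴴ * C :=
    CStarAlgebra.nonneg_iff_eq_star_mul_self.mp hB.nonneg
  have : (A * B).trace = ((X * Yᴴ) * (X * Yᴴ)ᴴ).trace := by
    rw [hX, hY]
    simp only [Matrix.conjTranspose_mul, Matrix.conjTranspose_conjTranspose]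
    rw [Matrix.mul_assoc, Matrix.mul_assoc, Matrix.trace_mul_comm,
      Matrix.mul_assoc, Matrix.mul_assoc]
  rw [this]
  exact trace_self_mul_transpose_nonneg _

private lemma psd_mul_eq_zero_of_trace {n : ℕ} {A B : Matrix (Fin n) (Fin n) ℝ}
    (hA : A.PosSemidef) (hB : B.PosSemidef) (h : (A * B).trace = 0) : A * B = 0 := by
  open scoped MatrixOrder Matrix.Norms.L2Operator in
  obtain ⟨X, hX⟩ : ∃ C, A = Cᴴ * C :=
    CStarAlgebra.nonneg_iff_eq_star_mul_self.mp hA.nonneg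
  open scoped MatrixOrder Matrix.Norms.L2Operator in
  obtain ⟨Y, hY⟩ : ∃ C, B = Cᴴ * C :=
    CStarAlgebra.nonneg_iff_eq_star_mul_self.mp hB.nonneg
  have key : (A * B).trace = ((X * Yᴴ) * (X * Yᴴ)ᴴ).trace := by
    rw [hX, hY]
    simp only [Matrix.conjTranspose_mul, Matrix.conjTranspose_conjTranspose]
    rw [Matrix.mul_assoc, Matrix.mul_assoc, Matrix.trace_mul_comm,
      Matrix.mul_assoc, Matrix.mul_assoc]
  have htr : ((X * Yᴴ) * (X * Yᴴ)ᴴ).trace = 0 := by rw [← key]; exact h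
  have hXY : X * Yᴴ = 0 := eq_zero_of_trace_self_mul_transpose _ htr
  rw [hX, hY, Matrix.mul_assoc, ← Matrix.mul_assoc X, hXY]
  simp

/-- Lemma 3 of the paper. Under the double-sided correlation
constraint `S₁ ⪯ Q₁ + Q₂ ⪯ S₂` with `S₂ − S₁ ≻ 0`, the KKT complementary slackness
conditions `Q₁M₁ = 0`, `Q₂M₂ = 0`, `(Q₁+Q₂−S₁)M₃ = 0`, `(S₂−Q₁−Q₂)M₄ = 0` and the
stationarity condition `M₄ = M₂ + M₃` imply `(S₂ − Q₁)·M₂ = 0`. -/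
theorem stmt_6 {n : ℕ} (Q₁ Q₂ M₁ M₂ M₃ M₄ S₁ S₂ : Matrix (Fin n) (Fin n) ℝ)
    (hQ₁ : Q₁.PosSemidef) (hQ₂ : Q₂.PosSemidef)
    (hM₁ : M₁.PosSemidef) (hM₂ : M₂.PosSemidef)
    (hM₃ : M₃.PosSemidef) (hM₄ : M₄.PosSemidef)
    (hS₁ : S₁.IsHermitian) (hS₂ : S₂.IsHermitian)
    (hSS : (S₂ - S₁).PosDef)
    (hlow : (Q₁ + Q₂ - S₁).PosSemidef) (hup : (S₂ - (Q₁ + Q₂)).PosSemidef)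
    (hcs₁ : Q₁ * M₁ = 0) (hcs₂ : Q₂ * M₂ = 0)
    (hcs₃ : (Q₁ + Q₂ - S₁) * M₃ = 0) (hcs₄ : (S₂ - Q₁ - Q₂) * M₄ = 0)
    (hstat : M₄ = M₂ + M₃) :
    (S₂ - Q₁) * M₂ = 0 := by
  have hA : (S₂ - Q₁ - Q₂).PosSemidef := by
    have : S₂ - Q₁ - Q₂ = S₂ - (Q₁ + Q₂) := by abel
    rw [this]; exact hup
  -- trace of (S₂ - Q₁ - Q₂) * M₂ is nonneg
  have h1 : 0 ≤ ((S₂ - Q₁ - Q₂) * M₂).trace := trace_psd_mul_nonneg hA hM₂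
  have hSSpsd : (S₂ - S₁).PosSemidef := hSS.posSemidef
  have h2 : 0 ≤ ((S₂ - S₁) * M₃).trace := trace_psd_mul_nonneg hSSpsd hM₃
  -- (S₂ - S₁) * M₃ = (S₂ - Q₁ - Q₂) * M₃
  have hM3 : (S₂ - S₁) * M₃ = (S₂ - Q₁ - Q₂) * M₃ := by
    have : (S₂ - S₁) * M₃ = (S₂ - Q₁ - Q₂) * M₃ + (Q₁ + Q₂ - S₁) * M₃ := by
      rw [← add_mul]
      congr 1
      abel
    rw [this, hcs₃, add_zero]
  -- sum of traces is zero
  have hsum : ((S₂ - Q₁ - Q₂) * M₂).trace + ((S₂ - S₁) * M₃).trace = 0 := by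
    rw [hM3, ← Matrix.trace_add, ← Matrix.mul_add, ← hstat, hcs₄, Matrix.trace_zero]
  have ht1 : ((S₂ - Q₁ - Q₂) * M₂).trace = 0 := le_antisymm (by linarith) h1
  have hz : (S₂ - Q₁ - Q₂) * M₂ = 0 := psd_mul_eq_zero_of_trace hA hM₂ ht1
  have : (S₂ - Q₁) * M₂ = (S₂ - Q₁ - Q₂) * M₂ + Q₂ * M₂ := by
    rw [← add_mul]
    congr 1
    abel
  rw [this, hz, hcs₂, add_zero]
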